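/- For odd n, the Majority function Maj(x)=sgn(Σ_{i=1}^n x_i) on {-1,1}^n is uniformly self-predicting: for all ρ∈[0,1] and all y∈{-1,1}^n, if T_ρ Maj(y)≠0 then sgn(T_ρ Maj(y))=Maj(y). -/

import Mathlib

/-- Map a Boolean bit to ±1 ∈ ℝ (true ↦ 1, false ↦ -1). -/
def toR (b : Bool) : ℝ := if b then 1 else -1

/-- The character χ_S(x) = ∏_{i∈S} x_i. -/
def chi {n : ℕ} (S : Finset (Fin n)) (x : Fin n → Bool) : ℝ := ∏ i ∈ S, toR (x i)

/-- Noise operator: T_ρ f (y) = E[f(X) | Y = y], where each coordinate of X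
independently equals y_i with probability (1+ρ)/2 and its flip with probability (1-ρ)/2. -/
noncomputable def Tcond {n : ℕ} (ρ : ℝ) (f : (Fin n → Bool) → ℝ) (y : Fin n → Bool) : ℝ :=
  ∑ x : Fin n → Bool, (∏ i, if x i = y i then (1 + ρ) / 2 else (1 - ρ) / 2) * f x

/-- Majority function Maj(x) = sgn(Σ_i x_i) on {-1,1}^n. -/
noncomputable def maj {n : ℕ} (x : Fin n → Bool) : ℝ := Real.sign (∑ i, toR (x i))

namespace MajUSP

lemma toR_not (b : Bool) : toR (!b) = - toR b := by cases b <;> simp [toR]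

lemma toR_beq (u v : Bool) : toR (u == v) = toR u * toR v := by
  cases u <;> cases v <;> norm_num [toR]

lemma sign_mono {x y : ℝ} (h : x ≤ y) : Real.sign x ≤ Real.sign y := by
  rcases lt_trichotomy x 0 with hx | hx | hx
  · rw [Real.sign_of_neg hx]
    rcases lt_trichotomy y 0 with hy | hy | hy
    · rw [Real.sign_of_neg hy]
    · rw [hy, Real.sign_zero]; norm_num
    · rw [Real.sign_of_pos hy]; norm_num
  · rw [hx, Real.sign_zero]
    rcases lt_trichotomy y 0 with hy | hy | hy
    · linarith
    · rw [hy, Real.sign_zero]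
    · rw [Real.sign_of_pos hy]; norm_num
  · rw [Real.sign_of_pos hx, Real.sign_of_pos (lt_of_lt_of_le hx h)]

lemma pow_sw {p q : ℝ} (hq : 0 ≤ q) (hpq : q ≤ p) {m j : ℕ} (h : m ≤ j) :
    p ^ m * q ^ j ≤ p ^ j * q ^ m := by
  have hp : 0 ≤ p := hq.trans hpq
  have hqj : q ^ j = q ^ (j - m) * q ^ m := by rw [← pow_add]; congr 1; omega
  have hpj : p ^ j = p ^ (j - m) * p ^ m := by rw [← pow_add]; congr 1; omega
  rw [hqj, hpj]
  have hle : q ^ (j - m) ≤ p ^ (j - m) := pow_le_pow_left₀ hq hpq _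
  have h1 : 0 ≤ p ^ m * q ^ m := mul_nonneg (pow_nonneg hp m) (pow_nonneg hq m)
  nlinarith [pow_nonneg hq m, pow_nonneg hp m]

/-! ### The block-swap permutation and the flip map -/

def sg (n a b : ℕ) (hab : a + b = n) (i : Fin n) : Fin n :=
  if i.val < a - b then i
  else if h2 : i.val < a then ⟨i.val + b, by omega⟩
  else ⟨i.val - b, by have := i.isLt; omega⟩

lemma sg_val (n a b : ℕ) (hab : a + b = n) (i : Fin n) :
    (sg n a b hab i).val =
      if i.val < a - b then i.val else if i.val < a then i.val + b else i.val - b := by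
  simp only [sg]
  split_ifs <;> rfl

lemma sg_invol (n a b : ℕ) (hab : a + b = n) (hba : b ≤ a) (i : Fin n) :
    sg n a b hab (sg n a b hab i) = i := by
  have hi := i.isLt
  apply Fin.ext
  rw [sg_val, sg_val]
  split_ifs <;> omega

lemma sg_lt_c (n a b : ℕ) (hab : a + b = n) (hba : b ≤ a) (i : Fin n) :
    (sg n a b hab i).val < a - b ↔ i.val < a - b := by
  have hi := i.isLt
  rw [sg_val]
  split_ifs <;> omega

lemma sg_decide (n a b : ℕ) (hab : a + b = n) (hba : b ≤ a) (i : Fin n) :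
    toR (decide (i.val < a)) + toR (decide ((sg n a b hab i).val < a)) =
      if i.val < a - b then 2 else 0 := by
  have hi := i.isLt
  by_cases h1 : i.val < a - b
  · rw [if_pos h1]
    have hs : (sg n a b hab i).val = i.val := by rw [sg_val]; split_ifs <;> omega
    rw [hs, decide_eq_true (show i.val < a by omega)]
    norm_num [toR]
  · rw [if_neg h1]
    by_cases h2 : i.val < a
    · have hs : (sg n a b hab i).val = i.val + b := by rw [sg_val]; split_ifs <;> omega
      rw [decide_eq_true h2, hs, decide_eq_false (show ¬ i.val + b < a by omega)]
      norm_num [toR]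
    · have hs : (sg n a b hab i).val = i.val - b := by rw [sg_val]; split_ifs <;> omega
      rw [decide_eq_false h2, hs, decide_eq_true (show i.val - b < a by omega)]
      norm_num [toR]

def tf (n c : ℕ) (ε : Fin n → Bool) (i : Fin n) : Bool := if i.val < c then !(ε i) else ε i

lemma tf_invol (n c : ℕ) (ε : Fin n → Bool) : tf n c (tf n c ε) = ε := by
  funext i; unfold tf; split_ifs <;> simp

/-! ### W, S, M -/

noncomputable def Wt (n : ℕ) (p q : ℝ) (ε : Fin n → Bool) : ℝ := ∏ i, if ε i then p else q

noncomputable def St (n c : ℕ) (ε : Fin n → Bool) : ℝ :=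
  ∑ i ∈ Finset.univ.filter (fun i : Fin n => i.val < c), toR (ε i)

noncomputable def Mt (n a : ℕ) (ε : Fin n → Bool) : ℝ :=
  ∑ i, toR (decide (i.val < a)) * toR (ε i)

section core

variable (n a b : ℕ) (hab : a + b = n) (hba : b ≤ a) (p q : ℝ)

include hba

def sge : Equiv.Perm (Fin n) := Function.Involutive.toPerm _ (sg_invol n a b hab hba)

lemma sge_apply (i : Fin n) : sge n a b hab hba i = sg n a b hab i := rfl

lemma W_sg (ε : Fin n → Bool) :
    Wt n p q (ε ∘ sg n a b hab) = Wt n p q ε := by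
  unfold Wt
  rw [← Equiv.prod_comp (sge n a b hab hba) (fun i => if ε i then p else q)]
  rfl

lemma M_add (ε : Fin n → Bool) :
    Mt n a ε + Mt n a (ε ∘ sg n a b hab) = 2 * St n (a - b) ε := by
  have h1 : Mt n a (ε ∘ sg n a b hab) =
      ∑ i, toR (decide ((sg n a b hab i).val < a)) * toR (ε i) := by
    unfold Mt
    rw [← Equiv.sum_comp (sge n a b hab hba)
      (fun i => toR (decide ((sg n a b hab i).val < a)) * toR (ε i))]
    apply Finset.sum_congr rfl
    intro i _
    rw [sge_apply, sg_invol n a b hab hba]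
    rfl
  rw [h1, Mt, ← Finset.sum_add_distrib, St, Finset.sum_filter, Finset.mul_sum]
  apply Finset.sum_congr rfl
  intro i _
  rw [← add_mul, sg_decide n a b hab hba]
  split_ifs <;> ring

lemma S_tf (c : ℕ) (ε : Fin n → Bool) : St n c (tf n c ε) = - St n c ε := by
  unfold St
  rw [← Finset.sum_neg_distrib]
  apply Finset.sum_congr rfl
  intro i hi
  rw [Finset.mem_filter] at hi
  rw [tf, if_pos hi.2, toR_not]

lemma M_tf (c : ℕ) (hca : c ≤ a) (ε : Fin n → Bool) :
    Mt n a (tf n c ε) = Mt n a ε - 2 * St n c ε := by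
  unfold Mt St
  rw [Finset.mul_sum, Finset.sum_filter, ← Finset.sum_sub_distrib]
  apply Finset.sum_congr rfl
  intro i _
  simp only [tf]
  split_ifs with h
  · rw [toR_not, decide_eq_true (by omega : i.val < a)]
    simp only [toR, if_pos]
    cases ε i <;> norm_num
  · ring

lemma tf_sg (ε : Fin n → Bool) :
    tf n (a - b) (ε ∘ sg n a b hab) = (tf n (a - b) ε) ∘ sg n a b hab := by
  funext i
  simp only [tf, Function.comp_apply]
  rw [if_congr (sg_lt_c n a b hab hba i).symm rfl rfl]

lemma W_tf_le (hq0 : 0 ≤ q) (hqp : q ≤ p) (c : ℕ) (ε : Fin n → Bool)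
    (hS : 0 ≤ St n c ε) : Wt n p q (tf n c ε) ≤ Wt n p q ε := by
  have hp0 : 0 ≤ p := hq0.trans hqp
  unfold Wt
  rw [← Finset.prod_filter_mul_prod_filter_not Finset.univ (fun i : Fin n => i.val < c)
    (fun i => if tf n c ε i then p else q),
    ← Finset.prod_filter_mul_prod_filter_not Finset.univ (fun i : Fin n => i.val < c)
    (fun i => if ε i then p else q)]
  have houter : ∀ i ∈ Finset.univ.filter (fun i : Fin n => ¬ i.val < c),
      (if tf n c ε i then p else q) = (if ε i then p else q) := by
    intro i hi
    rw [Finset.mem_filter] at hi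
    rw [tf, if_neg hi.2]
  rw [Finset.prod_congr rfl houter]
  apply mul_le_mul_of_nonneg_right _ (Finset.prod_nonneg (fun i _ => by split_ifs <;> assumption))
  have hinner : ∀ i ∈ Finset.univ.filter (fun i : Fin n => i.val < c),
      (if tf n c ε i then p else q) = (if ε i then q else p) := by
    intro i hi
    rw [Finset.mem_filter] at hi
    rw [tf, if_pos hi.2]
    cases ε i <;> simp
  rw [Finset.prod_congr rfl hinner]
  set s := Finset.univ.filter (fun i : Fin n => i.val < c) with hs
  rw [← Finset.prod_filter_mul_prod_filter_not s (fun i => ε i = true)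
    (fun i => if ε i then q else p),
    ← Finset.prod_filter_mul_prod_filter_not s (fun i => ε i = true)
    (fun i => if ε i then p else q)]
  have e1 : ∀ i ∈ s.filter (fun i => ε i = true), (if ε i then q else p) = q := by
    intro i hi; rw [Finset.mem_filter] at hi; rw [if_pos hi.2]
  have e2 : ∀ i ∈ s.filter (fun i => ¬ ε i = true), (if ε i then q else p) = p := by
    intro i hi; rw [Finset.mem_filter] at hi; rw [if_neg hi.2]
  have e3 : ∀ i ∈ s.filter (fun i => ε i = true), (if ε i then p else q) = p := by
    intro i hi; rw [Finset.mem_filter] at hi; rw [if_pos hi.2]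
  have e4 : ∀ i ∈ s.filter (fun i => ¬ ε i = true), (if ε i then p else q) = q := by
    intro i hi; rw [Finset.mem_filter] at hi; rw [if_neg hi.2]
  rw [Finset.prod_congr rfl e1, Finset.prod_congr rfl e2, Finset.prod_congr rfl e3,
    Finset.prod_congr rfl e4, Finset.prod_const, Finset.prod_const, Finset.prod_const,
    Finset.prod_const]
  set j := (s.filter (fun i => ε i = true)).card
  set m := (s.filter (fun i => ¬ ε i = true)).card
  have hjm : m ≤ j := by
    have hsum : St n c ε = (j : ℝ) - m := by
      unfold St
      rw [← hs, ← Finset.sum_filter_add_sum_filter_not s (fun i => ε i = true)]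
      have f1 : ∀ i ∈ s.filter (fun i => ε i = true), toR (ε i) = 1 := by
        intro i hi; rw [Finset.mem_filter] at hi; rw [toR, if_pos hi.2]
      have f2 : ∀ i ∈ s.filter (fun i => ¬ ε i = true), toR (ε i) = -1 := by
        intro i hi; rw [Finset.mem_filter] at hi; rw [toR, if_neg hi.2]
      rw [Finset.sum_congr rfl f1, Finset.sum_congr rfl f2, Finset.sum_const, Finset.sum_const,
        nsmul_eq_mul, nsmul_eq_mul]
      ring
    rw [hsum] at hS
    have : (m : ℝ) ≤ (j : ℝ) := by linarith
    exact_mod_cast this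
  calc q ^ j * p ^ m = p ^ m * q ^ j := by ring
    _ ≤ p ^ j * q ^ m := pow_sw hq0 hqp hjm

lemma G_nonneg (hq0 : 0 ≤ q) (hqp : q ≤ p) (ε : Fin n → Bool) :
    0 ≤ Wt n p q ε * Real.sign (Mt n a ε)
      + Wt n p q (ε ∘ sg n a b hab) * Real.sign (Mt n a (ε ∘ sg n a b hab))
      + Wt n p q (tf n (a - b) ε) * Real.sign (Mt n a (tf n (a - b) ε))
      + Wt n p q ((tf n (a - b) ε) ∘ sg n a b hab)
          * Real.sign (Mt n a ((tf n (a - b) ε) ∘ sg n a b hab)) := by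
  have hca : a - b ≤ a := Nat.sub_le a b
  set S := St n (a - b) ε with hS
  set M := Mt n a ε with hM
  have h1 : Mt n a (ε ∘ sg n a b hab) = 2 * S - M := by
    have := M_add n a b hab hba ε; linarith
  have h2 : Mt n a (tf n (a - b) ε) = M - 2 * S := M_tf n a b hba (a - b) hca ε
  have h3 : St n (a - b) (tf n (a - b) ε) = -S := S_tf n a b hba (a - b) ε
  have h4 : Wt n p q ((tf n (a - b) ε) ∘ sg n a b hab) = Wt n p q (tf n (a - b) ε) :=
    W_sg n a b hab hba p q _
  have h5 : Mt n a ((tf n (a - b) ε) ∘ sg n a b hab) = -M := by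
    have := M_add n a b hab hba (tf n (a - b) ε)
    rw [h2, h3] at this; linarith
  rw [W_sg n a b hab hba p q ε, h1, h2, h4, h5]
  have e1 : Real.sign (2 * S - M) = - Real.sign (M - 2 * S) := by
    rw [show 2 * S - M = -(M - 2 * S) by ring, Real.sign_neg]
  have e2 : Real.sign (-M) = - Real.sign M := Real.sign_neg
  rw [e1, e2]
  have key : Wt n p q ε * Real.sign M + Wt n p q ε * -Real.sign (M - 2 * S)
      + Wt n p q (tf n (a - b) ε) * Real.sign (M - 2 * S)
      + Wt n p q (tf n (a - b) ε) * -Real.sign M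
      = (Wt n p q ε - Wt n p q (tf n (a - b) ε))
          * (Real.sign M - Real.sign (M - 2 * S)) := by ring
  rw [key]
  rcases lt_trichotomy S 0 with hs | hs | hs
  · have hW : Wt n p q ε ≤ Wt n p q (tf n (a - b) ε) := by
      have := W_tf_le n a b hba p q hq0 hqp (a - b) (tf n (a - b) ε) (by rw [h3]; linarith)
      rwa [tf_invol] at this
    have hSg : Real.sign M ≤ Real.sign (M - 2 * S) := sign_mono (by linarith)
    nlinarith
  · rw [hs]
    norm_num
  · have hW : Wt n p q (tf n (a - b) ε) ≤ Wt n p q ε :=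
      W_tf_le n a b hba p q hq0 hqp (a - b) ε (le_of_lt hs)
    have hSg : Real.sign (M - 2 * S) ≤ Real.sign M := sign_mono (by linarith)
    nlinarith

end core

lemma core (n a b : ℕ) (hab : a + b = n) (hba : b ≤ a) (p q : ℝ)
    (hq0 : 0 ≤ q) (hqp : q ≤ p) :
    0 ≤ ∑ ε : Fin n → Bool, Wt n p q ε * Real.sign (Mt n a ε) := by
  classical
  set F : (Fin n → Bool) → ℝ := fun ε => Wt n p q ε * Real.sign (Mt n a ε) with hF
  have hsg : Function.Bijective (fun ε : Fin n → Bool => ε ∘ sg n a b hab) := by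
    apply Function.Involutive.bijective
    intro ε; funext i; exact congrArg ε (sg_invol n a b hab hba i)
  have htf : Function.Bijective (tf n (a - b)) :=
    Function.Involutive.bijective (tf_invol n (a - b))
  have hco : Function.Bijective (fun ε : Fin n → Bool => (tf n (a - b) ε) ∘ sg n a b hab) :=
    hsg.comp htf
  have s1 : ∑ ε : Fin n → Bool, F (ε ∘ sg n a b hab) = ∑ ε, F ε :=
    Fintype.sum_bijective _ hsg _ F (fun ε => rfl)
  have s2 : ∑ ε : Fin n → Bool, F (tf n (a - b) ε) = ∑ ε, F ε :=
    Fintype.sum_bijective _ htf _ F (fun ε => rfl)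
  have s3 : ∑ ε : Fin n → Bool, F ((tf n (a - b) ε) ∘ sg n a b hab) = ∑ ε, F ε :=
    Fintype.sum_bijective _ hco _ F (fun ε => rfl)
  have hfour : 0 ≤ ∑ ε : Fin n → Bool,
      (F ε + F (ε ∘ sg n a b hab) + F (tf n (a - b) ε)
        + F ((tf n (a - b) ε) ∘ sg n a b hab)) :=
    Finset.sum_nonneg (fun ε _ => G_nonneg n a b hab hba p q hq0 hqp ε)
  rw [Finset.sum_add_distrib, Finset.sum_add_distrib, Finset.sum_add_distrib, s1, s2, s3] at hfour
  linarith

/-! ### Change of variables and symmetries of `Tcond` -/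

lemma cov (n a : ℕ) (ρ : ℝ) :
    Tcond ρ (maj (n := n)) (fun i : Fin n => decide (i.val < a))
      = ∑ ε : Fin n → Bool, Wt n ((1 + ρ) / 2) ((1 - ρ) / 2) ε * Real.sign (Mt n a ε) := by
  rw [Tcond]
  symm
  refine Fintype.sum_bijective (fun ε : Fin n → Bool => fun i => (decide (i.val < a) == ε i))
    (Function.Involutive.bijective ?_) _ _ ?_
  · intro ε; funext i
    cases h : decide (i.val < a) <;> cases hh : ε i <;> simp [h, hh]
  · intro ε
    congr 1
    · rw [Wt]
      refine Finset.prod_congr rfl (fun i _ => ?_)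
      cases h1 : decide (i.val < a) <;> cases h2 : ε i <;> simp [h1, h2]
    · rw [maj, Mt]
      congr 1
      exact Finset.sum_congr rfl (fun i _ => (toR_beq _ _).symm)

lemma comp_perm_bij {α β : Type*} [Fintype α] (π : Equiv.Perm α) :
    Function.Bijective (fun x : α → β => x ∘ ⇑π) := by
  constructor
  · intro u v h
    funext i
    have := congrFun h (π.symm i)
    simpa using this
  · intro u
    exact ⟨u ∘ ⇑π.symm, by funext i; simp⟩

lemma tcond_perm (n : ℕ) (ρ : ℝ) (y : Fin n → Bool) (π : Equiv.Perm (Fin n)) :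
    Tcond ρ (maj (n := n)) (fun i => y (π i)) = Tcond ρ (maj (n := n)) y := by
  rw [Tcond, Tcond]
  refine Fintype.sum_bijective (fun x : Fin n → Bool => x ∘ ⇑π.symm)
    (comp_perm_bij π.symm) _ _ ?_
  intro x
  congr 1
  · have := Equiv.prod_comp π
      (fun i => if x (π.symm i) = y i then (1 + ρ) / 2 else (1 - ρ) / 2)
    simp only [Equiv.symm_apply_apply] at this
    exact this.symm ▸ this
  · simp only [maj, Function.comp_apply]
    congr 1
    exact (Equiv.sum_comp π.symm (fun i => toR (x i))).symm

lemma maj_neg (n : ℕ) (x : Fin n → Bool) : maj (fun i => !(x i)) = - maj x := by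
  rw [maj, maj, ← Real.sign_neg, ← Finset.sum_neg_distrib]
  congr 1
  exact Finset.sum_congr rfl (fun i _ => toR_not (x i))

lemma tcond_neg (n : ℕ) (ρ : ℝ) (y : Fin n → Bool) :
    Tcond ρ (maj (n := n)) (fun i => !(y i)) = - Tcond ρ (maj (n := n)) y := by
  rw [Tcond, Tcond, ← Finset.sum_neg_distrib]
  refine Fintype.sum_bijective (fun x : Fin n → Bool => fun i => !(x i))
    (Function.Involutive.bijective (fun x => by funext i; simp)) _ _ ?_
  intro x
  have h1 : (∏ i, if x i = !(y i) then (1 + ρ) / 2 else (1 - ρ) / 2)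
      = ∏ i, if (!(x i)) = y i then (1 + ρ) / 2 else (1 - ρ) / 2 := by
    refine Finset.prod_congr rfl (fun i _ => ?_)
    cases h1 : x i <;> cases h2 : y i <;> simp [h1, h2]
  rw [h1, maj_neg]
  ring

lemma card_lt_filter (n a : ℕ) (h : a ≤ n) :
    (Finset.univ.filter (fun i : Fin n => i.val < a)).card = a := by
  have : Finset.univ.filter (fun i : Fin n => i.val < a)
      = Finset.map (Fin.castLEEmb h) Finset.univ := by
    ext i
    simp only [Finset.mem_filter, Finset.mem_univ, true_and, Finset.mem_map]
    constructor
    · intro hi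
      exact ⟨⟨i.val, hi⟩, by apply Fin.ext; rfl⟩
    · rintro ⟨j, rfl⟩
      simpa using j.isLt
  rw [this, Finset.card_map, Finset.card_univ, Fintype.card_fin]

lemma exists_perm (n : ℕ) (y : Fin n → Bool) :
    ∃ π : Equiv.Perm (Fin n), ∀ i : Fin n,
      y (π i) = decide (i.val < (Finset.univ.filter (fun i => y i = true)).card) := by
  classical
  set a := (Finset.univ.filter (fun i : Fin n => y i = true)).card with ha
  have han : a ≤ n := le_trans (Finset.card_filter_le _ _) (by simp)
  have c1 : Fintype.card {i : Fin n // decide (i.val < a) = true} = a := by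
    rw [Fintype.card_subtype]
    have : (Finset.univ.filter (fun i : Fin n => decide (i.val < a) = true))
        = Finset.univ.filter (fun i : Fin n => i.val < a) := by
      apply Finset.filter_congr
      intro i _
      simp
    rw [this, card_lt_filter n a han]
  have c2 : Fintype.card {i : Fin n // y i = true} = a := by rw [Fintype.card_subtype]
  have e1 : {i : Fin n // decide (i.val < a) = true} ≃ {i : Fin n // y i = true} :=
    Fintype.equivOfCardEq (by rw [c1, c2])
  have e2 : {i : Fin n // ¬ decide (i.val < a) = true} ≃ {i : Fin n // ¬ y i = true} :=
    Fintype.equivOfCardEq (by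
      rw [Fintype.card_subtype_compl, Fintype.card_subtype_compl, c1, c2])
  refine ⟨(Equiv.sumCompl (fun i : Fin n => decide (i.val < a) = true)).symm.trans
    ((e1.sumCongr e2).trans (Equiv.sumCompl (fun i : Fin n => y i = true))), ?_⟩
  intro i
  by_cases h : decide (i.val < a) = true
  · have hstep : (Equiv.sumCompl (fun i : Fin n => decide (i.val < a) = true)).symm i
        = Sum.inl ⟨i, h⟩ := Equiv.sumCompl_symm_apply_of_pos (p := fun i : Fin n => decide (i.val < a) = true) (a := i) h
    rw [Equiv.trans_apply, Equiv.trans_apply, hstep]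
    simp only [Equiv.sumCongr_apply, Sum.map_inl, Equiv.sumCompl_apply_inl]
    rw [(e1 ⟨i, h⟩).2, h]
  · have hstep : (Equiv.sumCompl (fun i : Fin n => decide (i.val < a) = true)).symm i
        = Sum.inr ⟨i, h⟩ := Equiv.sumCompl_symm_apply_of_neg (p := fun i : Fin n => decide (i.val < a) = true) (a := i) h
    rw [Equiv.trans_apply, Equiv.trans_apply, hstep]
    simp only [Equiv.sumCongr_apply, Sum.map_inr, Equiv.sumCompl_apply_inr]
    have h2 := (e2 ⟨i, h⟩).2
    rw [Bool.not_eq_true] at h2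
    have h3 : decide (i.val < a) = false := by simpa using h
    rw [h2, h3]

lemma sum_toR (n : ℕ) (y : Fin n → Bool) :
    ∑ i, toR (y i)
      = 2 * ((Finset.univ.filter (fun i : Fin n => y i = true)).card : ℝ) - n := by
  classical
  have hsplit := Finset.card_filter_add_card_filter_not
    (s := (Finset.univ : Finset (Fin n))) (p := fun i => y i = true)
  rw [Finset.card_univ, Fintype.card_fin] at hsplit
  have : ∀ i : Fin n, toR (y i) = if y i = true then (1 : ℝ) else -1 := fun i => rfl
  rw [Finset.sum_congr rfl (fun i _ => this i), Finset.sum_ite, Finset.sum_const,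
    Finset.sum_const, nsmul_eq_mul, nsmul_eq_mul]
  push_cast [← hsplit]
  ring

end MajUSP

/-- For odd n, Majority is uniformly self-predicting. -/
theorem majority_usp {n : ℕ} (hn : Odd n) (ρ : ℝ) (hρ0 : 0 ≤ ρ) (hρ1 : ρ ≤ 1)
    (y : Fin n → Bool) (hne : Tcond ρ (maj (n := n)) y ≠ 0) :
    Real.sign (Tcond ρ (maj (n := n)) y) = maj y := by
  classical
  have hq0 : (0:ℝ) ≤ (1 - ρ) / 2 := by linarith
  have hqp : (1 - ρ) / 2 ≤ (1 + ρ) / 2 := by linarith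
  set a := (Finset.univ.filter (fun i : Fin n => y i = true)).card with ha
  have han : a ≤ n := le_trans (Finset.card_filter_le _ _) (by simp)
  have hodd : 2 * a ≠ n := by rcases hn with ⟨k, hk⟩; omega
  have hmaj : maj y = Real.sign (2 * (a:ℝ) - n) := by
    rw [maj, MajUSP.sum_toR n y]
  rcases Nat.lt_or_ge a (n - a) with hlt | hge
  · -- minority of trues: use negation
    have hcard' : (Finset.univ.filter (fun i : Fin n => (!(y i)) = true)).card = n - a := by
      have heq : (Finset.univ.filter (fun i : Fin n => (!(y i)) = true))
          = Finset.univ.filter (fun i : Fin n => ¬ y i = true) := by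
        apply Finset.filter_congr; intro i _; simp
      rw [heq]
      have hsplit := Finset.card_filter_add_card_filter_not
        (s := (Finset.univ : Finset (Fin n))) (p := fun i : Fin n => y i = true)
      rw [Finset.card_univ, Fintype.card_fin] at hsplit
      omega
    obtain ⟨π, hπ⟩ := MajUSP.exists_perm n (fun i => !(y i))
    have hy0 : (fun i => (fun j => !(y j)) (π i)) = fun i : Fin n => decide (i.val < n - a) := by
      funext i
      show (!(y (π i))) = decide (i.val < n - a)
      rw [hπ i, hcard']
    have hT' : Tcond ρ (maj (n := n)) (fun i => !(y i))
        = ∑ ε : Fin n → Bool, MajUSP.Wt n ((1 + ρ) / 2) ((1 - ρ) / 2) ε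
            * Real.sign (MajUSP.Mt n (n - a) ε) := by
      rw [← MajUSP.tcond_perm n ρ (fun i => !(y i)) π, hy0, MajUSP.cov]
    have hpos' : 0 ≤ Tcond ρ (maj (n := n)) (fun i => !(y i)) := by
      rw [hT']
      exact MajUSP.core n (n - a) a (by omega) (by omega) _ _ hq0 hqp
    have hneg : Tcond ρ (maj (n := n)) (fun i => !(y i)) = - Tcond ρ (maj (n := n)) y :=
      MajUSP.tcond_neg n ρ y
    have hne' : Tcond ρ (maj (n := n)) (fun i => !(y i)) ≠ 0 := by
      rw [hneg]
      exact neg_ne_zero.mpr hne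
    have hpos'' : 0 < Tcond ρ (maj (n := n)) (fun i => !(y i)) :=
      lt_of_le_of_ne hpos' (Ne.symm hne')
    have hTneg : Tcond ρ (maj (n := n)) y < 0 := by
      rw [hneg] at hpos''
      linarith
    have hcast : 2 * (a:ℝ) - n < 0 := by
      have : (2 * a : ℝ) < n := by exact_mod_cast (by omega : 2 * a < n)
      linarith
    rw [Real.sign_of_neg hTneg, hmaj, Real.sign_of_neg hcast]
  · -- majority of trues
    obtain ⟨π, hπ⟩ := MajUSP.exists_perm n y
    have hy0 : (fun i => y (π i)) = fun i : Fin n => decide (i.val < a) := by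
      funext i
      rw [hπ i]
    have hT : Tcond ρ (maj (n := n)) y = ∑ ε : Fin n → Bool,
        MajUSP.Wt n ((1 + ρ) / 2) ((1 - ρ) / 2) ε * Real.sign (MajUSP.Mt n a ε) := by
      rw [← MajUSP.tcond_perm n ρ y π, hy0, MajUSP.cov]
    have hpos : 0 ≤ Tcond ρ (maj (n := n)) y := by
      rw [hT]
      exact MajUSP.core n a (n - a) (by omega) (by omega) _ _ hq0 hqp
    have hTpos : 0 < Tcond ρ (maj (n := n)) y := lt_of_le_of_ne hpos (Ne.symm hne)
    have hcast : 0 < 2 * (a:ℝ) - n := by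
      have : (n:ℝ) < 2 * a := by exact_mod_cast (by omega : n < 2 * a)
      linarith
    rw [Real.sign_of_pos hTpos, hmaj, Real.sign_of_pos hcast]
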